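/- Let Z be a topological space, let A ⊆ Z be a nonempty path-connected subset, and suppose B := Z \ A is nonempty. Assume A admits a nearly strict deformation retraction R : Z × [0,1] → Z, and assume the evaluation map p : Holink(Z, A) → A, p(γ) = γ(0), is a Hurewicz fibration. Then A is contained in the closure of B. -/

import Mathlib

open Set unitInterval

/-- The homotopy link of a subset `A` of a topological space `Z`: the set of continuous
paths `γ : [0,1] → Z` with `γ 0 ∈ A` and `γ t ∉ A` for all `t ≠ 0`. -/
def Holink {Z : Type*} [TopologicalSpace Z] (A : Set Z) : Set C(unitInterval, Z) :=
  {γ | γ 0 ∈ A ∧ ∀ t : unitInterval, t ≠ 0 → γ t ∉ A}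

/-- A map `p : E → B` is a Hurewicz fibration: it has the homotopy lifting property
with respect to every topological space. -/
def IsHurewiczFibration {E B : Type*} [TopologicalSpace E] [TopologicalSpace B]
    (p : E → B) : Prop :=
  ∀ (W : Type) (_ : TopologicalSpace W) (H : C(W × unitInterval, B)) (G₀ : C(W, E)),
    (∀ w, p (G₀ w) = H (w, 0)) →
    ∃ G : C(W × unitInterval, E), (∀ wt, p (G wt) = H wt) ∧ ∀ w, G (w, 0) = G₀ w

/-- Frontier condition for a tame pair with fibered homotopy link:
if `A` is nonempty, path-connected, its complement `B = Z \ A` is nonempty,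
`A` admits a nearly strict deformation retraction, and evaluation at `0` of the
homotopy link is a Hurewicz fibration, then `A ⊆ closure B`. -/
theorem frontier_condition_of_tame_and_holink_fibration
    {Z : Type} [TopologicalSpace Z] (A : Set Z)
    (hA : A.Nonempty) (hpc : IsPathConnected A)
    (hB : (univ \ A : Set Z).Nonempty)
    (R : C(Z × unitInterval, Z))
    (hR0 : ∀ z : Z, R (z, 0) = z)
    (hRA : ∀ a ∈ A, ∀ t : unitInterval, R (a, t) = a)
    (hRc : ∀ z : Z, z ∈ univ \ A → ∀ t : unitInterval, t ≠ 1 → R (z, t) ∈ univ \ A)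
    (hR1 : ∀ z : Z, R (z, 1) ∈ A)
    (hfib : IsHurewiczFibration
      (fun γ : Holink A => (⟨γ.1 0, γ.2.1⟩ : A))) :
    A ⊆ closure (univ \ A) := by

  intro a ha
  obtain ⟨b, hb⟩ := hB
  -- the path δ t = R (b, symm t) lies in the homotopy link, starting at a₀ = R (b, 1)
  set a₀ : Z := R (b, 1) with ha₀def
  have ha₀ : a₀ ∈ A := hR1 b
  let δ : C(unitInterval, Z) :=
    ⟨fun t => R (b, unitInterval.symm t),
      R.continuous.comp (continuous_const.prodMk continuous_symm)⟩
  have hδ : δ ∈ Holink A := by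
    constructor
    · show R (b, unitInterval.symm 0) ∈ A
      rw [unitInterval.symm_zero]; exact hR1 b
    · intro t ht hmem
      have hne : unitInterval.symm t ≠ 1 := by
        intro h
        apply ht
        have := congrArg unitInterval.symm h
        rwa [unitInterval.symm_symm, unitInterval.symm_one] at this
      exact (hRc b hb (unitInterval.symm t) hne).2 hmem
  -- a path in A from a₀ to a
  obtain ⟨γp, hγp⟩ := hpc.joinedIn a₀ ha₀ a ha
  let H : C(Unit × unitInterval, A) :=
    ⟨fun wt => ⟨γp wt.2, hγp wt.2⟩,
      (γp.continuous.comp continuous_snd).subtype_mk _⟩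
  let G₀ : C(Unit, Holink A) := ContinuousMap.const _ ⟨δ, hδ⟩
  have hcomp : ∀ w, (fun γ : Holink A => (⟨γ.1 0, γ.2.1⟩ : A)) (G₀ w) = H (w, 0) := by
    intro w
    apply Subtype.ext
    show δ 0 = γp 0
    rw [γp.source]
    show R (b, unitInterval.symm 0) = a₀
    rw [unitInterval.symm_zero]
  obtain ⟨G, hG, -⟩ := hfib Unit inferInstance H G₀ hcomp
  set η : C(unitInterval, Z) := (G ((), 1)).1 with hηdef
  have hη : η ∈ Holink A := (G ((), 1)).2
  have hη0 : η 0 = a := by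
    have := congrArg Subtype.val (hG ((), 1))
    simpa [H, γp.target] using this
  -- now a = η 0 is a limit of points η t ∈ univ \ A for t ≠ 0
  haveI : (nhdsWithin (0 : unitInterval) (Ioi 0)).NeBot :=
    nhdsGT_neBot_of_exists_gt ⟨1, by norm_num⟩
  have htend : Filter.Tendsto (η : unitInterval → Z) (nhdsWithin 0 (Ioi 0)) (nhds a) := by
    rw [← hη0]
    exact (η.continuous.tendsto 0).mono_left nhdsWithin_le_nhds
  refine mem_closure_of_tendsto htend ?_
  filter_upwards [self_mem_nhdsWithin] with t ht
  exact ⟨trivial, hη.2 t ht.ne'⟩
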